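/- Let (x1,x2) and (y1,y2) be vertices of the minimal-rank-preserving direct product H = H1×̌H2 of finite hypergraphs. Then d_H((x1,x2),(y1,y2)) = min{ n ∈ ℕ : for i=1,2 the factor H_i has a walk of length n from x_i to y_i }, and d_H((x1,x2),(y1,y2)) = ∞ if no such n exists. -/

import Mathlib

/-!
Basic definitions: finite hypergraphs (a finite nonempty vertex set `V`, given by
`[Fintype V] [Nonempty V]`, together with a set of nonempty edges), walks, distance,
connectedness, simplicity, rank, colorings, Helly property, covers,
the various hypergraph products, 2-sections, and graph products.
-/

/-- A hypergraph on a vertex type `V`: a collection of nonempty edges (finite subsets of `V`). -/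
structure FinHypergraph (V : Type*) where
  edges : Set (Finset V)
  nonempty_edges : ∀ e ∈ edges, e.Nonempty

namespace FinHypergraph

variable {V V₁ V₂ : Type*}

/-- There is a walk of length `n` from `u` to `v`: a sequence of vertices `w 0, …, w n`
and edges `f 1, …, f n` with consecutive vertices distinct and both contained
in the corresponding edge. -/
def HasWalk (H : FinHypergraph V) (u v : V) (n : ℕ) : Prop :=
  ∃ (w : Fin (n + 1) → V) (f : Fin n → Finset V),
    w 0 = u ∧ w (Fin.last n) = v ∧
      ∀ i : Fin n, f i ∈ H.edges ∧ w i.castSucc ≠ w i.succ ∧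
        w i.castSucc ∈ f i ∧ w i.succ ∈ f i

/-- The distance between two vertices: the minimum length of a walk joining them,
`⊤ = ∞` if there is none. -/
noncomputable def dist (H : FinHypergraph V) (u v : V) : ℕ∞ :=
  sInf {x : ℕ∞ | ∃ n : ℕ, x = n ∧ H.HasWalk u v n}

/-- A hypergraph is connected if any two vertices are joined by a walk. -/
def Connected (H : FinHypergraph V) : Prop := ∀ u v : V, ∃ n, H.HasWalk u v n

/-- A hypergraph is simple if every edge has at least two vertices and
no edge is contained in another edge. -/
def Simple (H : FinHypergraph V) : Prop :=
  (∀ e ∈ H.edges, 2 ≤ e.card) ∧ ∀ e ∈ H.edges, ∀ f ∈ H.edges, e ⊆ f → e = f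

/-- A hypergraph is loopless if every edge has at least two vertices. -/
def Loopless (H : FinHypergraph V) : Prop := ∀ e ∈ H.edges, 2 ≤ e.card

/-- The rank: the maximum cardinality of an edge. -/
noncomputable def rank (H : FinHypergraph V) : ℕ := sSup (Finset.card '' H.edges)

/-- The anti-rank: the minimum cardinality of an edge. -/
noncomputable def antirank (H : FinHypergraph V) : ℕ := sInf (Finset.card '' H.edges)

/-- A proper coloring: no color class contains an edge. -/
def IsProperColoring (H : FinHypergraph V) {k : ℕ} (c : V → Fin k) : Prop :=
  ∀ e ∈ H.edges, ∀ i : Fin k, ¬ ∀ v ∈ e, c v = i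

/-- A proper strong coloring: a proper coloring in which the vertices of every
edge receive pairwise distinct colors. -/
def IsStrongColoring (H : FinHypergraph V) {k : ℕ} (c : V → Fin k) : Prop :=
  H.IsProperColoring c ∧ ∀ e ∈ H.edges, ∀ u ∈ e, ∀ v ∈ e, u ≠ v → c u ≠ c v

/-- The chromatic number: the least `k` admitting a proper `k`-coloring. -/
noncomputable def chromaticNumber (H : FinHypergraph V) : ℕ :=
  sInf {k : ℕ | ∃ c : V → Fin k, H.IsProperColoring c}

/-- The strong chromatic number: the least `k` admitting a proper strong `k`-coloring. -/
noncomputable def strongChromaticNumber (H : FinHypergraph V) : ℕ :=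
  sInf {k : ℕ | ∃ c : V → Fin k, H.IsStrongColoring c}

/-- The Helly property: every intersecting family of edges is a star. -/
def Helly (H : FinHypergraph V) : Prop :=
  ∀ E' ⊆ H.edges, (∀ e ∈ E', ∀ f ∈ E', ∃ x, x ∈ e ∧ x ∈ f) → ∃ v, ∀ e ∈ E', v ∈ e

/-- The covering number: the minimum cardinality of a set of vertices meeting every edge. -/
noncomputable def coverNumber (H : FinHypergraph V) : ℕ :=
  sInf {k : ℕ | ∃ T : Finset V, T.card = k ∧ ∀ e ∈ H.edges, ∃ v ∈ T, v ∈ e}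

/-- The Cartesian product of hypergraphs. -/
def cartProd (H₁ : FinHypergraph V₁) (H₂ : FinHypergraph V₂) : FinHypergraph (V₁ × V₂) where
  edges := {E | (∃ x, ∃ f ∈ H₂.edges, E = {x} ×ˢ f) ∨ ∃ e ∈ H₁.edges, ∃ y, E = e ×ˢ {y}}
  nonempty_edges := by
    rintro E (⟨x, f, hf, rfl⟩ | ⟨e, he, y, rfl⟩)
    · exact (Finset.singleton_nonempty x).product (H₂.nonempty_edges f hf)
    · exact (H₁.nonempty_edges e he).product (Finset.singleton_nonempty y)

section Products

variable [DecidableEq V₁] [DecidableEq V₂]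

/-- The minimal-rank-preserving direct product `H₁ ×̌ H₂`. -/
def minDirProd (H₁ : FinHypergraph V₁) (H₂ : FinHypergraph V₂) : FinHypergraph (V₁ × V₂) where
  edges := {E | ∃ e₁ ∈ H₁.edges, ∃ e₂ ∈ H₂.edges,
    E ⊆ e₁ ×ˢ e₂ ∧ E.card = min e₁.card e₂.card ∧
      (E.image Prod.fst).card = min e₁.card e₂.card ∧
      (E.image Prod.snd).card = min e₁.card e₂.card}
  nonempty_edges := by
    rintro E ⟨e₁, h₁, e₂, h₂, -, hc, -, -⟩
    rw [← Finset.card_pos, hc]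
    exact lt_min (Finset.card_pos.mpr (H₁.nonempty_edges e₁ h₁))
      (Finset.card_pos.mpr (H₂.nonempty_edges e₂ h₂))

/-- The maximal-rank-preserving direct product `H₁ ×̂ H₂`. -/
def maxDirProd (H₁ : FinHypergraph V₁) (H₂ : FinHypergraph V₂) : FinHypergraph (V₁ × V₂) where
  edges := {E | ∃ e₁ ∈ H₁.edges, ∃ e₂ ∈ H₂.edges,
    E ⊆ e₁ ×ˢ e₂ ∧ E.card = max e₁.card e₂.card ∧
      E.image Prod.fst = e₁ ∧ E.image Prod.snd = e₂}
  nonempty_edges := by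
    rintro E ⟨e₁, h₁, e₂, h₂, -, hc, -, -⟩
    rw [← Finset.card_pos, hc]
    exact lt_max_iff.mpr (Or.inl (Finset.card_pos.mpr (H₁.nonempty_edges e₁ h₁)))

/-- The non-rank-preserving direct product `H₁ ×̃ H₂`. -/
def nrDirProd (H₁ : FinHypergraph V₁) (H₂ : FinHypergraph V₂) : FinHypergraph (V₁ × V₂) where
  edges := {E | ∃ e ∈ H₁.edges, ∃ f ∈ H₂.edges, ∃ x ∈ e, ∃ y ∈ f,
    E = insert (x, y) ((e.erase x) ×ˢ (f.erase y))}
  nonempty_edges := by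
    rintro E ⟨e, -, f, -, x, -, y, -, rfl⟩
    exact Finset.insert_nonempty _ _

/-- The normal product `H₁ ⊠̌ H₂`: union of the Cartesian product edges and the
minimal-rank-preserving direct product edges. -/
def normalProd (H₁ : FinHypergraph V₁) (H₂ : FinHypergraph V₂) : FinHypergraph (V₁ × V₂) where
  edges := (H₁.cartProd H₂).edges ∪ (H₁.minDirProd H₂).edges
  nonempty_edges := by
    rintro E (h | h)
    · exact (H₁.cartProd H₂).nonempty_edges E h
    · exact (H₁.minDirProd H₂).nonempty_edges E h

/-- The strong product `H₁ ⊠̂ H₂`: union of the Cartesian product edges and the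
maximal-rank-preserving direct product edges. -/
def strongProd (H₁ : FinHypergraph V₁) (H₂ : FinHypergraph V₂) : FinHypergraph (V₁ × V₂) where
  edges := (H₁.cartProd H₂).edges ∪ (H₁.maxDirProd H₂).edges
  nonempty_edges := by
    rintro E (h | h)
    · exact (H₁.cartProd H₂).nonempty_edges E h
    · exact (H₁.maxDirProd H₂).nonempty_edges E h

/-- The lexicographic product `H₁ ∘ H₂`. -/
def lexProd (H₁ : FinHypergraph V₁) (H₂ : FinHypergraph V₂) : FinHypergraph (V₁ × V₂) where
  edges := {E | (E.image Prod.fst ∈ H₁.edges ∧ (E.image Prod.fst).card = E.card) ∨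
    ∃ x, ∃ e₂ ∈ H₂.edges, E = {x} ×ˢ e₂}
  nonempty_edges := by
    rintro E (⟨h₁, hc⟩ | ⟨x, e₂, h₂, rfl⟩)
    · rw [← Finset.card_pos, ← hc]
      exact Finset.card_pos.mpr (H₁.nonempty_edges _ h₁)
    · exact (Finset.singleton_nonempty x).product (H₂.nonempty_edges e₂ h₂)

end Products

/-- The square product `H₁ ■ H₂`. -/
def squareProd (H₁ : FinHypergraph V₁) (H₂ : FinHypergraph V₂) : FinHypergraph (V₁ × V₂) where
  edges := {E | ∃ e₁ ∈ H₁.edges, ∃ e₂ ∈ H₂.edges, E = e₁ ×ˢ e₂}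
  nonempty_edges := by
    rintro E ⟨e₁, h₁, e₂, h₂, rfl⟩
    exact (H₁.nonempty_edges e₁ h₁).product (H₂.nonempty_edges e₂ h₂)

/-- The 2-section of a hypergraph: distinct vertices are adjacent iff they lie
in a common edge. -/
def twoSection (H : FinHypergraph V) : SimpleGraph V where
  Adj x y := x ≠ y ∧ ∃ e ∈ H.edges, x ∈ e ∧ y ∈ e
  symm := by constructor; rintro x y ⟨hxy, e, he, hx, hy⟩; exact ⟨hxy.symm, e, he, hy, hx⟩
  loopless := by constructor; rintro x ⟨hx, -⟩; exact hx rfl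

end FinHypergraph

namespace SimpleGraph

variable {V₁ V₂ : Type*}

/-- The direct (tensor) product of simple graphs. -/
def directProd (G₁ : SimpleGraph V₁) (G₂ : SimpleGraph V₂) : SimpleGraph (V₁ × V₂) where
  Adj x y := G₁.Adj x.1 y.1 ∧ G₂.Adj x.2 y.2
  symm := ⟨fun _ _ ⟨h₁, h₂⟩ => ⟨h₁.symm, h₂.symm⟩⟩
  loopless := ⟨fun x h => G₁.loopless.irrefl x.1 h.1⟩

/-- The strong product of simple graphs. -/
def strongGraphProd (G₁ : SimpleGraph V₁) (G₂ : SimpleGraph V₂) : SimpleGraph (V₁ × V₂) where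
  Adj x y := x ≠ y ∧ ((x.1 = y.1 ∧ G₂.Adj x.2 y.2) ∨ (x.2 = y.2 ∧ G₁.Adj x.1 y.1) ∨
    (G₁.Adj x.1 y.1 ∧ G₂.Adj x.2 y.2))
  symm := by
    constructor
    rintro x y ⟨hne, (⟨h, h'⟩ | ⟨h, h'⟩ | ⟨h, h'⟩)⟩
    · exact ⟨hne.symm, Or.inl ⟨h.symm, h'.symm⟩⟩
    · exact ⟨hne.symm, Or.inr (Or.inl ⟨h.symm, h'.symm⟩)⟩
    · exact ⟨hne.symm, Or.inr (Or.inr ⟨h.symm, h'.symm⟩)⟩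
  loopless := by constructor; rintro x ⟨hx, -⟩; exact hx rfl

/-- The lexicographic product of simple graphs. -/
def lexGraphProd (G₁ : SimpleGraph V₁) (G₂ : SimpleGraph V₂) : SimpleGraph (V₁ × V₂) where
  Adj x y := G₁.Adj x.1 y.1 ∨ (x.1 = y.1 ∧ G₂.Adj x.2 y.2)
  symm := by
    constructor
    rintro x y (h | ⟨h, h'⟩)
    · exact Or.inl h.symm
    · exact Or.inr ⟨h.symm, h'.symm⟩
  loopless := by
    constructor
    rintro x (h | ⟨-, h⟩)
    · exact G₁.loopless.irrefl x.1 h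
    · exact G₂.loopless.irrefl x.2 h

end SimpleGraph

section Aux

variable {V₁ V₂ : Type*}

/-- An injection of `Fin m` into a finset hitting two prescribed distinct elements at 0 and 1. -/
lemma exists_inj_pair {V : Type*} (s : Finset V) {a b : V}
    (ha : a ∈ s) (hb : b ∈ s) (hab : a ≠ b) {m : ℕ} (hm : m ≤ s.card) (h2 : 2 ≤ m) :
    ∃ f : Fin m → V, Function.Injective f ∧ (∀ j, f j ∈ s) ∧
      f ⟨0, by omega⟩ = a ∧ f ⟨1, by omega⟩ = b := by
  classical
  have hc : 2 ≤ s.card := le_trans h2 hm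
  haveI : NeZero s.card := ⟨by omega⟩
  haveI : NeZero m := ⟨by omega⟩
  have h01c : (0 : Fin s.card) ≠ (1 : Fin s.card) := by
    intro h
    have h' := congrArg Fin.val h
    simp [Fin.val_zero, Fin.val_one', Nat.mod_eq_of_lt (show 1 < s.card by omega)] at h'
  set e := s.equivFin with he
  set A : Fin s.card := e ⟨a, ha⟩ with hA
  set B : Fin s.card := e ⟨b, hb⟩ with hB
  have hAB : A ≠ B := fun h => hab (Subtype.ext_iff.mp (e.injective h))
  set τ : Fin s.card ≃ Fin s.card := Equiv.swap A 0 with hτ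
  have hτA : τ A = 0 := Equiv.swap_apply_left A 0
  have hτB0 : τ B ≠ 0 := fun h => hAB (τ.injective (hτA.trans h.symm))
  set ρ : Fin s.card ≃ Fin s.card := Equiv.swap (τ B) 1 with hρ
  set σ : {x // x ∈ s} ≃ Fin s.card := (e.trans τ).trans ρ with hσ
  have hσa : σ ⟨a, ha⟩ = 0 := by
    show ρ (τ (e ⟨a, ha⟩)) = 0
    rw [← hA, hτA]
    exact Equiv.swap_apply_of_ne_of_ne (Ne.symm hτB0) h01c
  have hσb : σ ⟨b, hb⟩ = 1 := by
    show ρ (τ (e ⟨b, hb⟩)) = 1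
    rw [← hB]
    exact Equiv.swap_apply_left _ _
  have hcast0 : Fin.castLE hm ⟨0, by omega⟩ = (0 : Fin s.card) := by
    apply Fin.ext; simp
  have hcast1 : Fin.castLE hm ⟨1, by omega⟩ = (1 : Fin s.card) := by
    apply Fin.ext
    simp [Fin.val_one', Nat.mod_eq_of_lt (show 1 < s.card by omega)]
  refine ⟨fun j => (σ.symm (Fin.castLE hm j) : V), ?_, ?_, ?_, ?_⟩
  · intro i j hij
    exact Fin.castLE_injective hm (σ.symm.injective (Subtype.ext hij))
  · intro j; exact (σ.symm _).2
  · show ((σ.symm (Fin.castLE hm ⟨0, by omega⟩) : {x // x ∈ s}) : V) = a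
    rw [hcast0, ← hσa, Equiv.symm_apply_apply]
  · show ((σ.symm (Fin.castLE hm ⟨1, by omega⟩) : {x // x ∈ s}) : V) = b
    rw [hcast1, ← hσb, Equiv.symm_apply_apply]

variable [DecidableEq V₁] [DecidableEq V₂]

lemma minDirProd_exists_edge (H₁ : FinHypergraph V₁) (H₂ : FinHypergraph V₂)
    {e₁ : Finset V₁} {e₂ : Finset V₂} (h₁ : e₁ ∈ H₁.edges) (h₂ : e₂ ∈ H₂.edges)
    {a₁ b₁ : V₁} {a₂ b₂ : V₂} (ha₁ : a₁ ∈ e₁) (hb₁ : b₁ ∈ e₁) (ha₂ : a₂ ∈ e₂) (hb₂ : b₂ ∈ e₂)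
    (hne₁ : a₁ ≠ b₁) (hne₂ : a₂ ≠ b₂) :
    ∃ E ∈ (H₁.minDirProd H₂).edges, (a₁, a₂) ∈ E ∧ (b₁, b₂) ∈ E := by
  classical
  set m := min e₁.card e₂.card with hmdef
  have hm2 : 2 ≤ m := by
    exact
    le_min (Finset.one_lt_card.mpr ⟨a₁, ha₁, b₁, hb₁, hne₁⟩)
      (Finset.one_lt_card.mpr ⟨a₂, ha₂, b₂, hb₂, hne₂⟩)
  haveI : NeZero m := ⟨by omega⟩
  obtain ⟨f, hfinj, hfs, hf0, hf1⟩ :=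
    exists_inj_pair e₁ ha₁ hb₁ hne₁ (min_le_left _ _ : m ≤ e₁.card) hm2
  obtain ⟨g, hginj, hgs, hg0, hg1⟩ :=
    exists_inj_pair e₂ ha₂ hb₂ hne₂ (min_le_right _ _ : m ≤ e₂.card) hm2
  set E : Finset (V₁ × V₂) := Finset.image (fun j => (f j, g j)) Finset.univ with hE
  have hpair : Function.Injective (fun j : Fin m => (f j, g j)) := by
    intro i j h
    exact hfinj (congrArg Prod.fst h)
  refine ⟨E, ⟨e₁, h₁, e₂, h₂, ?_, ?_, ?_, ?_⟩, ?_, ?_⟩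
  · intro p hp
    rw [hE, Finset.mem_image] at hp
    obtain ⟨j, -, rfl⟩ := hp
    exact Finset.mem_product.mpr ⟨hfs j, hgs j⟩
  · rw [hE, Finset.card_image_of_injective _ hpair, Finset.card_univ, Fintype.card_fin]
  · rw [hE, Finset.image_image]
    rw [show (Prod.fst ∘ (fun j : Fin m => (f j, g j)) : Fin m → V₁) = f from rfl]
    rw [Finset.card_image_of_injective _ hfinj, Finset.card_univ, Fintype.card_fin]
  · rw [hE, Finset.image_image]
    rw [show (Prod.snd ∘ (fun j : Fin m => (f j, g j)) : Fin m → V₂) = g from rfl]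
    rw [Finset.card_image_of_injective _ hginj, Finset.card_univ, Fintype.card_fin]
  · rw [hE, Finset.mem_image]
    exact ⟨⟨0, by omega⟩, Finset.mem_univ _, by rw [hf0, hg0]⟩
  · rw [hE, Finset.mem_image]
    exact ⟨⟨1, by omega⟩, Finset.mem_univ _, by rw [hf1, hg1]⟩

lemma hasWalk_minDirProd (H₁ : FinHypergraph V₁) (H₂ : FinHypergraph V₂)
    (x₁ y₁ : V₁) (x₂ y₂ : V₂) (n : ℕ) :
    (H₁.minDirProd H₂).HasWalk (x₁, x₂) (y₁, y₂) n ↔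
      H₁.HasWalk x₁ y₁ n ∧ H₂.HasWalk x₂ y₂ n := by
  classical
  constructor
  · rintro ⟨w, F, hw0, hwn, hF⟩
    choose e₁ he₁ e₂ he₂ hsub hcard hfst hsnd using fun i => (hF i).1
    have hinj : ∀ i : Fin n, Set.InjOn Prod.fst ((F i : Finset (V₁ × V₂)) : Set (V₁ × V₂)) ∧ Set.InjOn Prod.snd ((F i : Finset (V₁ × V₂)) : Set (V₁ × V₂)) := by
      intro i
      constructor
      · exact Finset.card_image_iff.mp ((hfst i).trans (hcard i).symm)
      · exact Finset.card_image_iff.mp ((hsnd i).trans (hcard i).symm)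
    constructor
    · refine ⟨fun j => (w j).1, e₁, by simp only [hw0], by simp only [hwn], fun i => ⟨he₁ i, ?_, ?_, ?_⟩⟩
      · intro h
        exact (hF i).2.1 ((hinj i).1 (hF i).2.2.1 (hF i).2.2.2 h)
      · exact (Finset.mem_product.mp (hsub i (hF i).2.2.1)).1
      · exact (Finset.mem_product.mp (hsub i (hF i).2.2.2)).1
    · refine ⟨fun j => (w j).2, e₂, by simp only [hw0], by simp only [hwn], fun i => ⟨he₂ i, ?_, ?_, ?_⟩⟩
      · intro h
        exact (hF i).2.1 ((hinj i).2 (hF i).2.2.1 (hF i).2.2.2 h)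
      · exact (Finset.mem_product.mp (hsub i (hF i).2.2.1)).2
      · exact (Finset.mem_product.mp (hsub i (hF i).2.2.2)).2
  · rintro ⟨⟨w₁, f₁, hw10, hw1n, hf1⟩, ⟨w₂, f₂, hw20, hw2n, hf2⟩⟩
    have hE : ∀ i : Fin n, ∃ E ∈ (H₁.minDirProd H₂).edges,
        (w₁ i.castSucc, w₂ i.castSucc) ∈ E ∧ (w₁ i.succ, w₂ i.succ) ∈ E := fun i =>
      minDirProd_exists_edge H₁ H₂ (hf1 i).1 (hf2 i).1
        (hf1 i).2.2.1 (hf1 i).2.2.2 (hf2 i).2.2.1 (hf2 i).2.2.2 (hf1 i).2.1 (hf2 i).2.1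
    choose E hEmem hEa hEb using hE
    refine ⟨fun j => (w₁ j, w₂ j), E, by simp only [hw10, hw20], by simp only [hw1n, hw2n],
      fun i => ⟨hEmem i, ?_, hEa i, hEb i⟩⟩
    intro h
    exact (hf1 i).2.1 (congrArg Prod.fst h)

end Aux

/-- distance formula for the minimal-rank-preserving direct product:
the distance is the least `n` such that both factors have a walk of length `n`
between the corresponding coordinates (`∞` if there is no such `n`). -/
theorem dist_minDirProd {V₁ V₂ : Type*} [Fintype V₁] [Nonempty V₁] [DecidableEq V₁]
    [Fintype V₂] [Nonempty V₂] [DecidableEq V₂] (H₁ : FinHypergraph V₁) (H₂ : FinHypergraph V₂)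
    (x₁ y₁ : V₁) (x₂ y₂ : V₂) :
    (H₁.minDirProd H₂).dist (x₁, x₂) (y₁, y₂) =
      sInf {x : ℕ∞ | ∃ n : ℕ, x = n ∧ H₁.HasWalk x₁ y₁ n ∧ H₂.HasWalk x₂ y₂ n} := by
  rw [FinHypergraph.dist]
  congr 1
  ext x
  simp only [Set.mem_setOf_eq, hasWalk_minDirProd]
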